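/- For integers m₁, m₂, m₃, m₄, let h(m₁,m₂,m₃,m₄) be the matrix from the previous lemma with (a₃₁,a₄₁,a₅₁,a₆₁) = (m₁,m₂,m₃,m₄) and entries determined by a₁₁ = a₂₂ = 1, a₂₁ = -½ᵗaQ'a, (a₂₃,...,a₂₆) = -ᵗaQ'. Then h(a)·h(b) = h(a+b) for all a, b ∈ ℤ⁴; i.e., these matrices form a subgroup of the orthogonal group of Q isomorphic to ℤ⁴. -/
import Mathlib


open Matrix

/-- The Gram matrix of `U ⊕ U(2) ⊕ A₂(2)`, over `ℤ`. -/
def Qi : Matrix (Fin 6) (Fin 6) ℤ :=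
  !![0,1,0,0,0,0; 1,0,0,0,0,0; 0,0,0,2,0,0; 0,0,2,0,0,0; 0,0,0,0,-4,2; 0,0,0,0,2,-4]

/-- The translation matrix `h(m₁,m₂,m₃,m₄)`, whose entries are determined by
`a₁₁ = a₂₂ = 1`, `a₂₁ = -½ᵗaQ'a` and `(a₂₃,…,a₂₆) = -ᵗaQ'` for
`a = (m₁,m₂,m₃,m₄)`, where `Q' = U(2) ⊕ A₂(2)`. -/
def hM (m : Fin 4 → ℤ) : Matrix (Fin 6) (Fin 6) ℤ :=
  !![1,0,0,0,0,0;
     -2*(m 0)*(m 1) + 2*(m 2)^2 - 2*(m 2)*(m 3) + 2*(m 3)^2, 1,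
       -2*(m 1), -2*(m 0), 4*(m 2) - 2*(m 3), -2*(m 2) + 4*(m 3);
     m 0,0,1,0,0,0;
     m 1,0,0,1,0,0;
     m 2,0,0,0,1,0;
     m 3,0,0,0,0,1]

/-- Evaluating a six-entry vector at index `5`. -/
theorem cons_val_five' {α : Type*} {n : ℕ} (x : α) (u : Fin (n+5) → α) :
    vecCons x u 5 = vecHead (vecTail (vecTail (vecTail (vecTail u)))) := rfl

set_option maxHeartbeats 2000000 in
/-- The matrices `h(a)` lie in the orthogonal group of `Q` and satisfy
`h(a)·h(b) = h(a+b)`; hence they form a subgroup isomorphic to `ℤ⁴`. -/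
theorem stmt15 :
    (∀ m : Fin 4 → ℤ, (hM m)ᵀ * Qi * hM m = Qi) ∧
    (∀ a b : Fin 4 → ℤ, hM a * hM b = hM (a + b)) := by
  constructor
  · intro m
    ext i j
    fin_cases i <;> fin_cases j <;>
      simp [hM, Qi, Matrix.mul_apply, Fin.sum_univ_six, cons_val_five',
        Matrix.vecHead, Matrix.vecTail] <;> ring
  · intro a b
    ext i j
    fin_cases i <;> fin_cases j <;>
      simp [hM, Matrix.mul_apply, Fin.sum_univ_six, cons_val_five',
        Matrix.vecHead, Matrix.vecTail] <;> ring
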